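/- Let G be a finite group acting ergodically on a von Neumann algebra 𝔄 via a unitary representation U. Let p ∈ 𝔄 be a nonzero projection and let s_1 = 1, s_2, …, s_k be distinct elements of G such that for each i ≤ k, the closed subspace spanned by U(s_1)(range p), …, U(s_{i−1})(range p) intersects U(s_i)(range p) trivially. Suppose moreover that the closed subspace spanned by U(s_1)(range p), …, U(s_k)(range p) is not all of H. Then there exist t ∈ G with t ∉ {s_1, …, s_k} and a nonzero projection p' ∈ 𝔄 with range p' ⊆ range p such that the closed subspace spanned by U(s_1)(range p'), …, U(s_k)(range p') intersects U(t)(range p') trivially. -/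

import Mathlib

variable {H : Type*} [NormedAddCommGroup H] [InnerProductSpace ℂ H] [CompleteSpace H]

/-- A projection on a Hilbert space: a self-adjoint idempotent bounded operator. -/
def IsProjectionCLM (p : H →L[ℂ] H) : Prop := IsSelfAdjoint p ∧ IsIdempotentElem p

open ContinuousLinearMap

set_option linter.unusedSectionVars false

local notation "⟪" x ", " y "⟫" => @inner ℂ _ _ x y


noncomputable def prK (K : Submodule ℂ H) [CompleteSpace K] : H →L[ℂ] H :=
  K.subtypeL ∘L K.orthogonalProjectionOnto

lemma prK_apply_mem (K : Submodule ℂ H) [CompleteSpace K] (x : H) : prK K x ∈ K :=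
  (K.orthogonalProjectionOnto x).2

lemma prK_eq_self {K : Submodule ℂ H} [CompleteSpace K] {x : H} (hx : x ∈ K) :
    prK K x = x := Submodule.starProjection_eq_self_iff.2 hx

lemma prK_selfAdjoint (K : Submodule ℂ H) [CompleteSpace K] : IsSelfAdjoint (prK K) :=
  isSelfAdjoint_starProjection K

lemma prK_idem (K : Submodule ℂ H) [CompleteSpace K] : IsIdempotentElem (prK K) := by
  ext x
  exact prK_eq_self (prK_apply_mem K x)

lemma range_prK (K : Submodule ℂ H) [CompleteSpace K] :
    LinearMap.range ((prK K) : H →ₗ[ℂ] H) = K := by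
  refine le_antisymm ?_ ?_
  · rintro x ⟨y, rfl⟩
    exact prK_apply_mem K y
  · intro x hx
    exact ⟨x, prK_eq_self hx⟩

lemma commute_prK {K : Submodule ℂ H} [CompleteSpace K] {S : H →L[ℂ] H}
    (h1 : ∀ x ∈ K, S x ∈ K) (h2 : ∀ x ∈ K, star S x ∈ K) :
    S * prK K = prK K * S := by
  have key : ∀ T : H →L[ℂ] H, (∀ x ∈ K, T x ∈ K) → prK K * (T * prK K) = T * prK K := by
    intro T hT
    ext x
    exact prK_eq_self (hT _ (prK_apply_mem K x))
  have e1 := key S h1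
  have e2 := key (star S) h2
  have e3 := congrArg star e2
  simp only [star_mul, star_star, (prK_selfAdjoint K).star_eq] at e3
  rw [← e1, ← mul_assoc, e3]

lemma projCLM_fix {q : H →L[ℂ] H} (hq : IsIdempotentElem q) {x : H}
    (hx : x ∈ LinearMap.range (q : H →ₗ[ℂ] H)) : q x = x := by
  obtain ⟨y, rfl⟩ := hx
  have := congrFun (congrArg DFunLike.coe hq) y
  simpa using this

lemma range_proj_closed {q : H →L[ℂ] H} (hq : IsIdempotentElem q) :
    IsClosed ((LinearMap.range (q : H →ₗ[ℂ] H) : Submodule ℂ H) : Set H) := by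
  have : ((LinearMap.range (q : H →ₗ[ℂ] H) : Submodule ℂ H) : Set H) = {x | q x = x} := by
    ext x
    exact ⟨fun hx => projCLM_fix hq hx, fun hx => ⟨x, hx⟩⟩
  rw [this]
  exact isClosed_eq q.continuous continuous_id

lemma ker_proj_eq {q : H →L[ℂ] H} (hq : IsProjectionCLM q) :
    LinearMap.ker (q : H →ₗ[ℂ] H) = (LinearMap.range (q : H →ₗ[ℂ] H))ᗮ := by
  have hadj : adjoint q = q := by rw [← star_eq_adjoint, hq.1.star_eq]
  ext x
  constructor
  · intro hx
    rw [Submodule.mem_orthogonal]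
    rintro y ⟨z, rfl⟩
    have h := adjoint_inner_left q x z
    rw [hadj] at h
    change ⟪q z, x⟫ = 0
    rw [h, show q x = 0 from LinearMap.mem_ker.mp hx, inner_zero_right]
  · intro hx
    have h1 : ⟪q x, q x⟫ = ⟪x, q x⟫ := by
      have h := adjoint_inner_right q x (q x)
      rw [hadj] at h
      calc ⟪q x, q x⟫ = ⟪x, q (q x)⟫ := h.symm
        _ = ⟪x, q x⟫ := by rw [← ContinuousLinearMap.mul_apply q q x, hq.2]
    have h2 : ⟪q x, x⟫ = 0 := (Submodule.mem_orthogonal _ x).mp hx (q x) ⟨x, rfl⟩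
    have h3 : ⟪x, q x⟫ = 0 := by
      rw [← inner_conj_symm, h2, map_zero]
    rw [h3] at h1
    exact LinearMap.mem_ker.mpr (inner_self_eq_zero.mp h1)

lemma preserve_closure {V W : Submodule ℂ H} (hW : IsClosed (W : Set H))
    {S : H →L[ℂ] H} (h : ∀ x ∈ V, S x ∈ W) :
    ∀ x ∈ V.topologicalClosure, S x ∈ W := by
  have hc : IsClosed ((W.comap (S : H →ₗ[ℂ] H) : Submodule ℂ H) : Set H) :=
    hW.preimage S.continuous
  have hle : V ≤ W.comap (S : H →ₗ[ℂ] H) := fun x hx => h x hx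
  exact fun x hx => Submodule.topologicalClosure_minimal V hle hc hx

lemma mem_vna_iff (𝔄 : VonNeumannAlgebra H) (T : H →L[ℂ] H) :
    T ∈ 𝔄 ↔ ∀ S ∈ Set.centralizer (𝔄 : Set (H →L[ℂ] H)), S * T = T * S := by
  constructor
  · intro hT S hS
    exact (hS T hT).symm
  · intro h
    have : T ∈ Set.centralizer (Set.centralizer (𝔄 : Set (H →L[ℂ] H))) := fun S hS => h S hS
    rwa [𝔄.centralizer_centralizer] at this

lemma star_mem_centralizer {𝔄 : VonNeumannAlgebra H} {S : H →L[ℂ] H}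
    (hS : S ∈ Set.centralizer (𝔄 : Set (H →L[ℂ] H))) :
    star S ∈ Set.centralizer (𝔄 : Set (H →L[ℂ] H)) := by
  intro T hT
  have h1 : star T * S = S * star T := hS (star T) (star_mem hT)
  calc T * star S = star (S * star T) := by rw [star_mul, star_star]
    _ = star (star T * S) := by rw [h1]
    _ = star S * T := by rw [star_mul, star_star]

lemma mapsto_iSup {ι : Sort*} (V : ι → Submodule ℂ H) {W : Submodule ℂ H} {S : H →L[ℂ] H}
    (h : ∀ i, ∀ x ∈ V i, S x ∈ W) : ∀ x ∈ ⨆ i, V i, S x ∈ W := by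
  have hle : (⨆ i, V i) ≤ W.comap (S : H →ₗ[ℂ] H) := iSup_le fun i x hx => h i x hx
  exact fun x hx => hle hx

lemma centralizer_preserves_range {𝔄 : VonNeumannAlgebra H} {S : H →L[ℂ] H}
    (hS : S ∈ Set.centralizer (𝔄 : Set (H →L[ℂ] H))) {q : H →L[ℂ] H} (hq : q ∈ 𝔄) :
    ∀ x ∈ LinearMap.range (q : H →ₗ[ℂ] H), S x ∈ LinearMap.range (q : H →ₗ[ℂ] H) := by
  rintro x ⟨y, rfl⟩
  refine ⟨S y, ?_⟩
  calc q (S y) = (q * S) y := rfl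
    _ = (S * q) y := by rw [hS q hq]
    _ = S (q y) := rfl

lemma proj_mem_vna (𝔄 : VonNeumannAlgebra H) {K : Submodule ℂ H} [CompleteSpace K]
    (h : ∀ S ∈ Set.centralizer (𝔄 : Set (H →L[ℂ] H)), ∀ x ∈ K, S x ∈ K) :
    prK K ∈ 𝔄 := by
  rw [mem_vna_iff]
  intro S hS
  exact commute_prK (h S hS) (h (star S) (star_mem_centralizer hS))

/-- Suppose a finite group `G` acts ergodically on a von Neumann algebra `𝔄` via a unitary
representation `U`.  Let `p ∈ 𝔄` be a nonzero projection and `s 0 = 1, s 1, …` distinct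
elements of `G` such that for each `i` the closed subspace spanned by the `U (s j) (range p)`
for `j < i` meets `U (s i) (range p)` trivially, and such that the closed subspace spanned by
all the `U (s j) (range p)` is proper.  Then there are `t ∈ G` outside `{s 0, …}` and a
nonzero projection `p' ∈ 𝔄` with `range p' ⊆ range p` such that the closed subspace spanned
by the `U (s j) (range p')` meets `U t (range p')` trivially. -/
theorem ergodic_extend_disjoint_translates
    {G : Type*} [Group G] [Fintype G]
    (𝔄 : VonNeumannAlgebra H) (U : G →* unitary (H →L[ℂ] H))
    (hinv : ∀ T ∈ 𝔄, ∀ s : G,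
      (U s : H →L[ℂ] H) * T * star (U s : H →L[ℂ] H) ∈ 𝔄)
    (herg : ∀ T ∈ 𝔄,
      (∀ s : G, (U s : H →L[ℂ] H) * T * star (U s : H →L[ℂ] H) = T) →
      ∃ c : ℂ, T = c • (1 : H →L[ℂ] H))
    (p : H →L[ℂ] H) (hp : IsProjectionCLM p) (hpA : p ∈ 𝔄) (hp0 : p ≠ 0)
    (k : ℕ) (hk : 0 < k) (s : Fin k → G)
    (hs1 : s ⟨0, hk⟩ = 1) (hsinj : Function.Injective s)
    (hdisj : ∀ i : Fin k,
      (⨆ j : Fin k, ⨆ _ : j < i,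
          (LinearMap.range (p : H →ₗ[ℂ] H)).map ((U (s j) : H →L[ℂ] H) : H →ₗ[ℂ] H)).topologicalClosure ⊓
        (LinearMap.range (p : H →ₗ[ℂ] H)).map ((U (s i) : H →L[ℂ] H) : H →ₗ[ℂ] H) = ⊥)
    (hproper : (⨆ j : Fin k,
        (LinearMap.range (p : H →ₗ[ℂ] H)).map ((U (s j) : H →L[ℂ] H) : H →ₗ[ℂ] H)).topologicalClosure ≠ ⊤) :
    ∃ t : G, t ∉ Set.range s ∧
      ∃ p' : H →L[ℂ] H, IsProjectionCLM p' ∧ p' ∈ 𝔄 ∧ p' ≠ 0 ∧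
        LinearMap.range (p' : H →ₗ[ℂ] H) ≤ LinearMap.range (p : H →ₗ[ℂ] H) ∧
        (⨆ j : Fin k,
            (LinearMap.range (p' : H →ₗ[ℂ] H)).map ((U (s j) : H →L[ℂ] H) : H →ₗ[ℂ] H)).topologicalClosure ⊓
          (LinearMap.range (p' : H →ₗ[ℂ] H)).map ((U t : H →L[ℂ] H) : H →ₗ[ℂ] H) = ⊥ := by
  classical
  -- basic facts about the unitaries
  have happ : ∀ (a b : H →L[ℂ] H) (x : H), (a * b) x = a (b x) := fun _ _ _ => rfl
  have humul : ∀ a b : G, (U a : H →L[ℂ] H) * (U b : H →L[ℂ] H) = (U (a * b) : H →L[ℂ] H) := by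
    intro a b; rw [map_mul]; rfl
  have hu1 : (U (1 : G) : H →L[ℂ] H) = 1 := by rw [map_one]; rfl
  have hstar_mul : ∀ t : G, star (U t : H →L[ℂ] H) * (U t : H →L[ℂ] H) = 1 :=
    fun t => (Unitary.mem_iff.mp (U t).2).1
  have hmul_star : ∀ t : G, (U t : H →L[ℂ] H) * star (U t : H →L[ℂ] H) = 1 :=
    fun t => (Unitary.mem_iff.mp (U t).2).2
  have hstar : ∀ t : G, star (U t : H →L[ℂ] H) = (U t⁻¹ : H →L[ℂ] H) := by
    intro t
    calc star (U t : H →L[ℂ] H)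
        = star (U t : H →L[ℂ] H) * ((U t : H →L[ℂ] H) * (U t⁻¹ : H →L[ℂ] H)) := by
          rw [humul, mul_inv_cancel, hu1, mul_one]
      _ = (star (U t : H →L[ℂ] H) * (U t : H →L[ℂ] H)) * (U t⁻¹ : H →L[ℂ] H) := by
          rw [mul_assoc]
      _ = (U t⁻¹ : H →L[ℂ] H) := by rw [hstar_mul, one_mul]
  have hsmapp : ∀ (g : G) (x : H), star (U g : H →L[ℂ] H) ((U g : H →L[ℂ] H) x) = x := by
    intro g x
    rw [show star (U g : H →L[ℂ] H) ((U g : H →L[ℂ] H) x) =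
      (star (U g : H →L[ℂ] H) * (U g : H →L[ℂ] H)) x from rfl, hstar_mul]
    rfl
  have hmsapp : ∀ (g : G) (x : H), (U g : H →L[ℂ] H) (star (U g : H →L[ℂ] H) x) = x := by
    intro g x
    rw [show (U g : H →L[ℂ] H) (star (U g : H →L[ℂ] H) x) =
      ((U g : H →L[ℂ] H) * star (U g : H →L[ℂ] H)) x from rfl, hmul_star]
    rfl
  have hpp : ∀ x : H, p (p x) = p x := by
    intro x
    rw [show p (p x) = (p * p) x from rfl, hp.2]
  -- the translated projections
  set q : G → H →L[ℂ] H := fun t => (U t : H →L[ℂ] H) * p * star (U t : H →L[ℂ] H) with hqdef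
  have hq𝔄 : ∀ t, q t ∈ 𝔄 := fun t => hinv p hpA t
  have hq_sa : ∀ t, IsSelfAdjoint (q t) := by
    intro t
    simp only [hqdef, IsSelfAdjoint, star_mul, star_star, hp.1.star_eq, mul_assoc]
  have hq_idem : ∀ t, IsIdempotentElem (q t) := by
    intro t
    show q t * q t = q t
    simp only [hqdef]
    have : ((U t : H →L[ℂ] H) * p * star (U t : H →L[ℂ] H)) *
        ((U t : H →L[ℂ] H) * p * star (U t : H →L[ℂ] H)) =
        (U t : H →L[ℂ] H) * (p * ((star (U t : H →L[ℂ] H) * (U t : H →L[ℂ] H)) *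
          (p * star (U t : H →L[ℂ] H)))) := by
      simp only [mul_assoc]
    rw [this, hstar_mul, one_mul, ← mul_assoc p p, hp.2]
    simp only [mul_assoc]
  have hq_proj : ∀ t, IsProjectionCLM (q t) := fun t => ⟨hq_sa t, hq_idem t⟩
  have hrange_q : ∀ t, LinearMap.range ((q t) : H →ₗ[ℂ] H) = (LinearMap.range (p : H →ₗ[ℂ] H)).map ((U t : H →L[ℂ] H) : H →ₗ[ℂ] H) := by
    intro t
    apply le_antisymm
    · rintro x ⟨y, rfl⟩
      exact ⟨p (star (U t : H →L[ℂ] H) y), ⟨_, rfl⟩, rfl⟩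
    · rintro x ⟨z, ⟨w, rfl⟩, rfl⟩
      refine ⟨(U t : H →L[ℂ] H) (p w), ?_⟩
      show (U t : H →L[ℂ] H) (p (star (U t : H →L[ℂ] H) ((U t : H →L[ℂ] H) (p w)))) = _
      rw [hsmapp, hpp]
      rfl
  -- N is everything
  set N : Submodule ℂ H :=
    (⨆ t : G, (LinearMap.range (p : H →ₗ[ℂ] H)).map ((U t : H →L[ℂ] H) : H →ₗ[ℂ] H)).topologicalClosure with hNdef
  have hNclosed : IsClosed (N : Set H) := Submodule.isClosed_topologicalClosure _
  haveI : CompleteSpace N := hNclosed.completeSpace_coe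
  have hUN : ∀ g : G, ∀ x ∈ N, (U g : H →L[ℂ] H) x ∈ N := by
    intro g
    refine preserve_closure hNclosed (mapsto_iSup _ ?_)
    rintro i x ⟨z, hz, rfl⟩
    refine Submodule.le_topologicalClosure _
      (le_iSup (fun t => (LinearMap.range (p : H →ₗ[ℂ] H)).map ((U t : H →L[ℂ] H) : H →ₗ[ℂ] H)) (g * i) ?_)
    refine ⟨z, hz, ?_⟩
    rw [← humul]; rfl
  have hcentN : ∀ S ∈ Set.centralizer (𝔄 : Set (H →L[ℂ] H)), ∀ x ∈ N, S x ∈ N := by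
    intro S hS
    refine preserve_closure hNclosed (mapsto_iSup _ ?_)
    intro i x hx
    rw [← hrange_q i] at hx
    have h2 := centralizer_preserves_range hS (hq𝔄 i) x hx
    rw [hrange_q i] at h2
    exact Submodule.le_topologicalClosure _
      (le_iSup (fun t => (LinearMap.range (p : H →ₗ[ℂ] H)).map ((U t : H →L[ℂ] H) : H →ₗ[ℂ] H)) i h2)
  set f : H →L[ℂ] H := prK N with hfdef
  have hf𝔄 : f ∈ 𝔄 := proj_mem_vna 𝔄 hcentN
  have hfinv : ∀ g : G, (U g : H →L[ℂ] H) * f * star (U g : H →L[ℂ] H) = f := by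
    intro g
    have hcomm : (U g : H →L[ℂ] H) * f = f * (U g : H →L[ℂ] H) := by
      refine commute_prK (hUN g) ?_
      intro x hx
      rw [hstar]
      exact hUN g⁻¹ x hx
    rw [hcomm, mul_assoc, hmul_star, mul_one]
  obtain ⟨x0, hx0⟩ : ∃ x, p x ≠ 0 := by
    by_contra h
    push_neg at h
    exact hp0 (ContinuousLinearMap.ext fun x => by simp [h x])
  have hpN : ∀ y : H, p y ∈ N := by
    intro y
    refine Submodule.le_topologicalClosure _
      (le_iSup (fun t => (LinearMap.range (p : H →ₗ[ℂ] H)).map ((U t : H →L[ℂ] H) : H →ₗ[ℂ] H)) 1 ?_)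
    exact ⟨p y, ⟨y, rfl⟩, by rw [hu1]; rfl⟩
  have hNtop : N = ⊤ := by
    obtain ⟨c, hc⟩ := herg f hf𝔄 hfinv
    have hfp : f (p x0) = p x0 := prK_eq_self (hpN x0)
    rw [hc] at hfp
    simp only [ContinuousLinearMap.smul_apply, ContinuousLinearMap.one_apply] at hfp
    have hc1 : c = 1 := by
      by_contra hcne
      have : (c - 1) • p x0 = 0 := by rw [sub_smul, one_smul, hfp, sub_self]
      rcases smul_eq_zero.mp this with h | h
      · exact hcne (by rwa [sub_eq_zero] at h)
      · exact hx0 h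
    rw [hc1, one_smul] at hc
    rw [eq_top_iff]
    intro x _
    have : f x = x := by rw [hc]; rfl
    rw [← this]
    exact prK_apply_mem _ _
  -- the subspace M
  set M : Submodule ℂ H :=
    (⨆ j : Fin k, (LinearMap.range (p : H →ₗ[ℂ] H)).map ((U (s j) : H →L[ℂ] H) : H →ₗ[ℂ] H)).topologicalClosure with hMdef
  have hMclosed : IsClosed (M : Set H) := Submodule.isClosed_topologicalClosure _
  haveI : CompleteSpace M := hMclosed.completeSpace_coe
  have hcentM : ∀ S ∈ Set.centralizer (𝔄 : Set (H →L[ℂ] H)), ∀ x ∈ M, S x ∈ M := by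
    intro S hS
    refine preserve_closure hMclosed (mapsto_iSup _ ?_)
    intro j x hx
    rw [← hrange_q (s j)] at hx
    have h2 := centralizer_preserves_range hS (hq𝔄 (s j)) x hx
    rw [hrange_q (s j)] at h2
    exact Submodule.le_topologicalClosure _
      (le_iSup (fun j : Fin k => (LinearMap.range (p : H →ₗ[ℂ] H)).map ((U (s j) : H →L[ℂ] H) : H →ₗ[ℂ] H)) j h2)
  set e : H →L[ℂ] H := prK M with hedef
  have he𝔄 : e ∈ 𝔄 := proj_mem_vna 𝔄 hcentM
  -- choice of t
  obtain ⟨t, ht⟩ : ∃ t : G, ¬ ((LinearMap.range (p : H →ₗ[ℂ] H)).map ((U t : H →L[ℂ] H) : H →ₗ[ℂ] H) ≤ M) := by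
    by_contra h
    push_neg at h
    exact hproper (top_le_iff.mp (hNtop ▸
      Submodule.topologicalClosure_minimal _ (iSup_le h) hMclosed))
  have htnot : t ∉ Set.range s := by
    rintro ⟨j, rfl⟩
    exact ht ((le_iSup (fun j : Fin k =>
      (LinearMap.range (p : H →ₗ[ℂ] H)).map ((U (s j) : H →L[ℂ] H) : H →ₗ[ℂ] H)) j).trans
      (Submodule.le_topologicalClosure _))
  -- the operators C and A
  set C : H →L[ℂ] H := (1 - e) * q t with hCdef
  set A : H →L[ℂ] H := star C * C with hAdef
  have hC𝔄 : C ∈ 𝔄 := mul_mem (sub_mem (one_mem _) he𝔄) (hq𝔄 t)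
  have hA𝔄 : A ∈ 𝔄 := mul_mem (star_mem hC𝔄) hC𝔄
  have hCapp : ∀ x : H, C x = q t x - e (q t x) := by
    intro x
    show ((1 - e) * q t) x = _
    rw [happ]
    simp [ContinuousLinearMap.sub_apply]
  have hC0 : C ≠ 0 := by
    obtain ⟨x, hxmem, hxM⟩ := SetLike.not_le_iff_exists.mp ht
    intro hC
    apply hxM
    have hqx : q t x = x := projCLM_fix (hq_idem t) (by rwa [hrange_q t])
    have : C x = 0 := by rw [hC]; rfl
    rw [hCapp, hqx, sub_eq_zero] at this
    rw [this]
    exact prK_apply_mem M x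
  have hA0 : A ≠ 0 := by
    intro hA
    apply hC0
    ext y
    have h1 : (inner ℂ (C y) (C y) : ℂ) = inner ℂ y (A y) := by
      have h2 := ContinuousLinearMap.adjoint_inner_right C y (C y)
      rw [← ContinuousLinearMap.star_eq_adjoint] at h2
      rw [← h2]; rfl
    rw [hA] at h1
    simp only [ContinuousLinearMap.zero_apply, inner_zero_right] at h1
    simpa using inner_self_eq_zero.mp h1
  -- the subspace K and projection r
  haveI : CompleteSpace (LinearMap.ker (A : H →ₗ[ℂ] H) : Submodule ℂ H) :=
    (ContinuousLinearMap.isClosed_ker A).completeSpace_coe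
  set K : Submodule ℂ H := (LinearMap.ker (A : H →ₗ[ℂ] H))ᗮ with hKdef
  haveI : CompleteSpace K := (Submodule.isClosed_orthogonal _).completeSpace_coe
  have hKne : K ≠ ⊥ := by
    intro hKbot
    apply hA0
    have : (LinearMap.ker (A : H →ₗ[ℂ] H) : Submodule ℂ H) = ⊤ := by
      rw [← Submodule.orthogonal_orthogonal (LinearMap.ker (A : H →ₗ[ℂ] H)), ← hKdef, hKbot,
        Submodule.bot_orthogonal_eq_top]
    ext y
    simpa using (LinearMap.mem_ker.mp (this ▸ Submodule.mem_top (x := y)) : A y = 0)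
  have hkerle : LinearMap.ker ((q t) : H →ₗ[ℂ] H) ≤ LinearMap.ker (A : H →ₗ[ℂ] H) := by
    intro y hy
    have hCy : C y = 0 := by rw [hCapp, show q t y = 0 from LinearMap.mem_ker.mp hy]; simp
    have : A y = star C (C y) := rfl
    rw [LinearMap.mem_ker, ContinuousLinearMap.coe_coe, this, hCy, map_zero]
  have hKle : K ≤ LinearMap.range ((q t) : H →ₗ[ℂ] H) := by
    haveI : CompleteSpace (LinearMap.range ((q t) : H →ₗ[ℂ] H) : Submodule ℂ H) :=
      (range_proj_closed (hq_idem t)).completeSpace_coe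
    calc K ≤ (LinearMap.ker ((q t) : H →ₗ[ℂ] H))ᗮ := Submodule.orthogonal_le hkerle
      _ = ((LinearMap.range ((q t) : H →ₗ[ℂ] H))ᗮ)ᗮ := by rw [ker_proj_eq (hq_proj t)]
      _ = LinearMap.range ((q t) : H →ₗ[ℂ] H) := Submodule.orthogonal_orthogonal _
  have hcentK : ∀ S ∈ Set.centralizer (𝔄 : Set (H →L[ℂ] H)), ∀ x ∈ K, S x ∈ K := by
    intro S hS x hx
    rw [hKdef, Submodule.mem_orthogonal]
    intro y hy
    have hstarS := star_mem_centralizer hS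
    have hySA : star S y ∈ LinearMap.ker (A : H →ₗ[ℂ] H) := by
      rw [LinearMap.mem_ker]
      have h1 : A * star S = star S * A := hstarS A hA𝔄
      calc A (star S y) = (A * star S) y := rfl
        _ = (star S * A) y := by rw [h1]
        _ = star S (A y) := rfl
        _ = 0 := by rw [show A y = 0 from LinearMap.mem_ker.mp hy, map_zero]
    have h2 : (inner ℂ (star S y) x : ℂ) = 0 :=
      (Submodule.mem_orthogonal _ x).mp hx (star S y) hySA
    have h3 := ContinuousLinearMap.adjoint_inner_left S x y
    rw [← ContinuousLinearMap.star_eq_adjoint] at h3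
    rw [← h3, h2]
  set r : H →L[ℂ] H := prK K with hrdef
  have hr𝔄 : r ∈ 𝔄 := proj_mem_vna 𝔄 hcentK
  have hr0 : r ≠ 0 := by
    obtain ⟨x, hxK, hxne⟩ := Submodule.exists_mem_ne_zero_of_ne_bot hKne
    intro hr
    apply hxne
    have : r x = x := prK_eq_self hxK
    rw [hr] at this
    simpa using this.symm
  -- the projection p'
  refine ⟨t, htnot, star (U t : H →L[ℂ] H) * r * (U t : H →L[ℂ] H), ?_, ?_, ?_, ?_, ?_⟩
  · constructor
    · show star _ = _
      simp only [star_mul, star_star, ((prK_selfAdjoint K).star_eq : star r = r), mul_assoc]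
      exact congrArg (star (U t : H →L[ℂ] H) * ·) (congrArg (· * (U t : H →L[ℂ] H)) (prK_selfAdjoint K).star_eq)
    · show _ * _ = _
      have h1 : (star (U t : H →L[ℂ] H) * r * (U t : H →L[ℂ] H)) *
          (star (U t : H →L[ℂ] H) * r * (U t : H →L[ℂ] H)) =
          star (U t : H →L[ℂ] H) * (r * (((U t : H →L[ℂ] H) * star (U t : H →L[ℂ] H)) *
            (r * (U t : H →L[ℂ] H)))) := by
        simp only [mul_assoc]
      rw [h1, hmul_star, one_mul, ← mul_assoc r r, prK_idem, ← mul_assoc]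
  · have h := hinv r hr𝔄 t⁻¹
    rw [hstar t⁻¹, inv_inv, ← hstar t] at h
    exact h
  · intro hp'
    apply hr0
    have h1 : (U t : H →L[ℂ] H) * (star (U t : H →L[ℂ] H) * r * (U t : H →L[ℂ] H)) *
        star (U t : H →L[ℂ] H) = r := by
      have h2 : (U t : H →L[ℂ] H) * (star (U t : H →L[ℂ] H) * r * (U t : H →L[ℂ] H)) *
          star (U t : H →L[ℂ] H) = ((U t : H →L[ℂ] H) * star (U t : H →L[ℂ] H)) * r *
          ((U t : H →L[ℂ] H) * star (U t : H →L[ℂ] H)) := by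
        simp only [mul_assoc]
      rw [h2, hmul_star, one_mul, mul_one]
    rw [hp'] at h1
    rw [← h1]
    simp
  · rintro x ⟨y, rfl⟩
    have h1 : (star (U t : H →L[ℂ] H) * r * (U t : H →L[ℂ] H)) y =
        star (U t : H →L[ℂ] H) (r ((U t : H →L[ℂ] H) y)) := rfl
    obtain ⟨z, hz, hzz⟩ : r ((U t : H →L[ℂ] H) y) ∈
        (LinearMap.range (p : H →ₗ[ℂ] H)).map ((U t : H →L[ℂ] H) : H →ₗ[ℂ] H) := by
      rw [← hrange_q t]
      exact hKle (prK_apply_mem K _)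
    simp only [ContinuousLinearMap.coe_coe]
    rw [h1, ← hzz]
    simp only [ContinuousLinearMap.coe_coe]
    rw [hsmapp]
    exact hz
  · rw [eq_bot_iff]
    rintro x hx
    rw [Submodule.mem_inf] at hx
    obtain ⟨hx1, hx2⟩ := hx
    have hxM : x ∈ M := by
      refine Submodule.topologicalClosure_mono (iSup_mono fun j => Submodule.map_mono ?_) hx1
      rintro w ⟨y, rfl⟩
      have h1 : (star (U t : H →L[ℂ] H) * r * (U t : H →L[ℂ] H)) y =
          star (U t : H →L[ℂ] H) (r ((U t : H →L[ℂ] H) y)) := rfl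
      obtain ⟨z, hz, hzz⟩ : r ((U t : H →L[ℂ] H) y) ∈
          (LinearMap.range (p : H →ₗ[ℂ] H)).map ((U t : H →L[ℂ] H) : H →ₗ[ℂ] H) := by
        rw [← hrange_q t]
        exact hKle (prK_apply_mem K _)
      simp only [ContinuousLinearMap.coe_coe]
      rw [h1, ← hzz]
      simp only [ContinuousLinearMap.coe_coe]
      rw [hsmapp]
      exact hz
    have hxK : x ∈ K := by
      obtain ⟨y, ⟨w, rfl⟩, rfl⟩ := hx2
      have h1 : (U t : H →L[ℂ] H) ((star (U t : H →L[ℂ] H) * r * (U t : H →L[ℂ] H)) w) =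
          r ((U t : H →L[ℂ] H) w) := by
        show (U t : H →L[ℂ] H) (star (U t : H →L[ℂ] H) (r ((U t : H →L[ℂ] H) w))) = _
        rw [hmsapp]
      simp only [ContinuousLinearMap.coe_coe]
      rw [h1]
      exact prK_apply_mem K _
    -- x ∈ M ⊓ K implies x = 0
    have hqx : q t x = x := projCLM_fix (hq_idem t) (hKle hxK)
    have hex : e x = x := prK_eq_self hxM
    have hCx : C x = 0 := by rw [hCapp, hqx, hex, sub_self]
    have hAx : x ∈ LinearMap.ker (A : H →ₗ[ℂ] H) := by
      rw [LinearMap.mem_ker]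
      show star C (C x) = 0
      rw [hCx, map_zero]
    have := (Submodule.mem_orthogonal _ x).mp hxK x hAx
    simpa using inner_self_eq_zero.mp this
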